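/- Let {p_i} be orthonormal polynomials with respect to a probability measure μ on [-1,1], with p_i(1) > 0 for all i and satisfying the Christoffel–Darboux relation with ratios a_{l+1} = k_{l+1}/k_l of leading coefficients. For j < i define γ_{i,j} = ∫_{−1}^1 ((p_i(t) − p_i(1))/(t−1)) p_j(t) dμ(t). Then γ_{i,j} = p_i(1) p_j(1) Σ_{l=j}^{i−1} a_{l+1}/(p_l(1) p_{l+1}(1)) for j < i, and γ_{i,j} = 0 for j ≥ i. -/

import Mathlib

open MeasureTheory Polynomial

private lemma int_poly (μ : Measure ℝ) [IsFiniteMeasure μ]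
    (hsupp : μ (Set.Icc (-1 : ℝ) 1)ᶜ = 0) (f : Polynomial ℝ) :
    Integrable (fun t => f.eval t) μ := by
  obtain ⟨M, hM⟩ := (isCompact_Icc (a := (-1 : ℝ)) (b := 1)).exists_bound_of_continuousOn
    f.continuous.continuousOn
  refine Integrable.mono' (integrable_const M) f.continuous.aestronglyMeasurable ?_
  rw [ae_iff]
  refine measure_mono_null ?_ hsupp
  intro t ht h
  exact ht (hM t h)

private lemma J_add (μ : Measure ℝ) [IsFiniteMeasure μ]
    (hsupp : μ (Set.Icc (-1 : ℝ) 1)ᶜ = 0) (f g : Polynomial ℝ) :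
    ∫ t, (f + g).eval t ∂μ = ∫ t, f.eval t ∂μ + ∫ t, g.eval t ∂μ := by
  simp only [eval_add]
  exact integral_add (int_poly μ hsupp f) (int_poly μ hsupp g)

private lemma J_sub (μ : Measure ℝ) [IsFiniteMeasure μ]
    (hsupp : μ (Set.Icc (-1 : ℝ) 1)ᶜ = 0) (f g : Polynomial ℝ) :
    ∫ t, (f - g).eval t ∂μ = ∫ t, f.eval t ∂μ - ∫ t, g.eval t ∂μ := by
  simp only [eval_sub]
  exact integral_sub (int_poly μ hsupp f) (int_poly μ hsupp g)

private lemma J_Cmul (μ : Measure ℝ) [IsFiniteMeasure μ]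
    (c : ℝ) (f : Polynomial ℝ) :
    ∫ t, (C c * f).eval t ∂μ = c * ∫ t, f.eval t ∂μ := by
  simp only [eval_mul, eval_C]
  exact integral_const_mul c _

private lemma orth_lower (μ : Measure ℝ) [IsFiniteMeasure μ]
    (hsupp : μ (Set.Icc (-1 : ℝ) 1)ᶜ = 0)
    (p : ℕ → Polynomial ℝ)
    (hdeg : ∀ i, (p i).natDegree = i)
    (hpne : ∀ i, p i ≠ 0)
    (horth : ∀ i j, ∫ t, (p i).eval t * (p j).eval t ∂μ = if i = j then 1 else 0) :
    ∀ (m j : ℕ), m ≤ j → ∀ s : Polynomial ℝ, s.degree < (m : ℕ) →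
      ∫ t, (s * p j).eval t ∂μ = 0 := by
  intro m
  induction m with
  | zero =>
    intro j _ s hs
    have h0 : s = 0 := by
      rw [← degree_eq_bot]
      exact Nat.WithBot.lt_zero_iff.mp (by simpa using hs)
    simp [h0]
  | succ m ih =>
    intro j hj s hs
    have hlead : (p m).leadingCoeff ≠ 0 := leadingCoeff_ne_zero.mpr (hpne m)
    have hcm : (p m).coeff m = (p m).leadingCoeff := by
      have h := coeff_natDegree (p := p m)
      rwa [hdeg m] at h
    set β := s.coeff m / (p m).leadingCoeff with hβ
    have hs' : (s - C β * p m).degree < (m : ℕ) := by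
      rw [degree_lt_iff_coeff_zero]
      intro k hk
      have hk' : m ≤ k := by exact_mod_cast hk
      rcases eq_or_lt_of_le hk' with h | h
      · rw [← h]
        rw [coeff_sub, coeff_C_mul, hcm, hβ]
        field_simp [hlead]
        ring
      · have h1 : s.coeff k = 0 :=
          coeff_eq_zero_of_degree_lt (lt_of_lt_of_le hs (by exact_mod_cast h))
        have h2 : (p m).coeff k = 0 :=
          coeff_eq_zero_of_natDegree_lt (by rw [hdeg]; exact h)
        rw [coeff_sub, coeff_C_mul, h1, h2, mul_zero, sub_zero]
    have h1 : ∫ t, ((s - C β * p m) * p j).eval t ∂μ = 0 := ih j (by omega) _ hs'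
    have h2 : ∫ t, (p m * p j).eval t ∂μ = 0 := by
      have := horth m j
      rw [if_neg (by omega)] at this
      simpa [eval_mul] using this
    have e : s * p j = (s - C β * p m) * p j + C β * (p m * p j) := by ring
    rw [e, J_add μ hsupp, h1, J_Cmul μ, h2, mul_zero, add_zero]

theorem gamma_formula (μ : Measure ℝ) [IsProbabilityMeasure μ]
    (hsupp : μ (Set.Icc (-1 : ℝ) 1)ᶜ = 0)
    (p : ℕ → Polynomial ℝ)
    (hdeg : ∀ i, (p i).natDegree = i)
    (hone : ∀ i, 0 < (p i).eval 1)
    (horth : ∀ i j, ∫ t, (p i).eval t * (p j).eval t ∂μ = if i = j then 1 else 0)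
    (a : ℕ → ℝ)
    (ha : ∀ l : ℕ, a (l + 1) = (p (l + 1)).leadingCoeff / (p l).leadingCoeff)
    (i j : ℕ) (q : Polynomial ℝ)
    (hq : (X - C 1) * q = p i - C ((p i).eval 1)) :
    (j < i →
      ∫ t, q.eval t * (p j).eval t ∂μ =
        (p i).eval 1 * (p j).eval 1 *
          ∑ l ∈ Finset.Ico j i, a (l + 1) / ((p l).eval 1 * (p (l + 1)).eval 1)) ∧
    (i ≤ j → ∫ t, q.eval t * (p j).eval t ∂μ = 0) := by
  have hpne : ∀ l, p l ≠ 0 := by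
    intro l h
    have := hone l
    rw [h] at this
    simp at this
  have hone' : ∀ l, (p l).eval 1 ≠ 0 := fun l => (hone l).ne'
  have hlead : ∀ l, (p l).leadingCoeff ≠ 0 := fun l => leadingCoeff_ne_zero.mpr (hpne l)
  set Q : ℕ → Polynomial ℝ := fun l => (p l - C ((p l).eval 1)) /ₘ (X - C 1) with hQdef
  have hQ : ∀ l, (X - C 1) * Q l = p l - C ((p l).eval 1) := by
    intro l
    exact mul_divByMonic_eq_iff_isRoot.mpr (by simp [IsRoot])
  have hqQ : q = Q i := mul_left_cancel₀ (X_sub_C_ne_zero 1) (hq.trans (hQ i).symm)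
  have hQ0 : Q 0 = 0 := by
    have h0 : p 0 - C ((p 0).eval 1) = 0 := by
      conv_lhs => rw [eq_C_of_natDegree_eq_zero (hdeg 0)]
      simp
    have h1 := hQ 0
    rw [h0] at h1
    exact (mul_eq_zero.mp h1).resolve_left (X_sub_C_ne_zero 1)
  have hdegQ : ∀ l, (Q l).degree < (l : ℕ) := by
    intro l
    by_cases h0 : Q l = 0
    · rw [h0, degree_zero]; exact WithBot.bot_lt_coe l
    · have h1 : ((X - C 1 : Polynomial ℝ) * Q l).natDegree = 1 + (Q l).natDegree := by
        rw [natDegree_mul (X_sub_C_ne_zero 1) h0, natDegree_X_sub_C]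
      have h2 : ((X - C (1 : ℝ)) * Q l).natDegree = l := by
        rw [hQ l, natDegree_sub_C, hdeg l]
      have h3 : (Q l).natDegree < l := by omega
      rw [degree_eq_natDegree h0]
      exact_mod_cast h3
  have hQne : ∀ l, Q (l + 1) ≠ 0 := by
    intro l h
    have h1 := hQ (l + 1)
    rw [h, mul_zero] at h1
    have h2 : (p (l + 1)).natDegree = (p (l+1) - C ((p (l+1)).eval 1)).natDegree :=
      (natDegree_sub_C).symm
    rw [← h1, natDegree_zero, hdeg] at h2
    omega
  have hQdeg : ∀ l, (Q (l + 1)).natDegree = l := by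
    intro l
    have h1 : ((X - C 1 : Polynomial ℝ) * Q (l + 1)).natDegree = 1 + (Q (l + 1)).natDegree := by
      rw [natDegree_mul (X_sub_C_ne_zero 1) (hQne l), natDegree_X_sub_C]
    have h2 : ((X - C (1 : ℝ)) * Q (l + 1)).natDegree = l + 1 := by
      rw [hQ (l + 1), natDegree_sub_C, hdeg]
    omega
  have hQlead : ∀ l, (Q (l + 1)).leadingCoeff = (p (l + 1)).leadingCoeff := by
    intro l
    have h1 : ((X - C 1 : Polynomial ℝ) * Q (l + 1)).leadingCoeff = (Q (l + 1)).leadingCoeff := by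
      rw [leadingCoeff_mul, leadingCoeff_X_sub_C, one_mul]
    have h2 : (p (l + 1) - C ((p (l + 1)).eval 1)).leadingCoeff = (p (l + 1)).leadingCoeff := by
      rw [leadingCoeff, natDegree_sub_C, coeff_sub, coeff_C,
        if_neg (by rw [hdeg]; omega), sub_zero, leadingCoeff]
    rw [← h1, hQ (l + 1), h2]
  have hlow : ∀ l k, l ≤ k → ∫ t, (Q l * p k).eval t ∂μ = 0 := by
    intro l k hlk
    refine orth_lower μ hsupp p hdeg hpne horth k k le_rfl (Q l) ?_
    exact lt_of_lt_of_le (hdegQ l) (by exact_mod_cast hlk)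
  set d : ℕ → ℝ := fun l => ∫ t, (Q l).eval t ∂μ with hd
  -- symmetry relation
  have hsym : ∀ k l : ℕ,
      ∫ t, (Q k * p l).eval t ∂μ - (p l).eval 1 * d k =
      ∫ t, (Q l * p k).eval t ∂μ - (p k).eval 1 * d l := by
    intro k l
    have hpoly : Q k * p l - C ((p l).eval 1) * Q k = Q l * p k - C ((p k).eval 1) * Q l := by
      linear_combination (Q l) * hQ k - (Q k) * hQ l
    have h1 := congrArg (fun f : Polynomial ℝ => ∫ t, f.eval t ∂μ) hpoly
    rw [J_sub μ hsupp, J_sub μ hsupp, J_Cmul μ, J_Cmul μ] at h1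
    exact h1
  -- recursion for d
  have hrec : ∀ l, (p l).eval 1 * d (l + 1) - (p (l + 1)).eval 1 * d l = a (l + 1) := by
    intro l
    set r : Polynomial ℝ := C ((p l).eval 1) * Q (l + 1) - C ((p (l + 1)).eval 1) * Q l with hr0
    have hr : (X - C 1) * r = C ((p l).eval 1) * p (l + 1) - C ((p (l + 1)).eval 1) * p l := by
      rw [hr0]
      linear_combination (C ((p l).eval 1)) * hQ (l + 1) - (C ((p (l + 1)).eval 1)) * hQ l
    have hQc : (Q (l + 1)).coeff l = (p (l + 1)).leadingCoeff := by
      have h := coeff_natDegree (p := Q (l + 1))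
      rwa [hQdeg l, hQlead l] at h
    have hrc : r.coeff l = (p l).eval 1 * (p (l + 1)).leadingCoeff := by
      rw [hr0, coeff_sub, coeff_C_mul, coeff_C_mul, hQc,
        coeff_eq_zero_of_degree_lt (hdegQ l), mul_zero, sub_zero]
    have hplc : (p l).coeff l = (p l).leadingCoeff := by
      have h := coeff_natDegree (p := p l)
      rwa [hdeg l] at h
    have hsdeg : (r - C ((p l).eval 1 * a (l + 1)) * p l).degree < (l : ℕ) := by
      rw [degree_lt_iff_coeff_zero]
      intro k hk
      have hk' : l ≤ k := by exact_mod_cast hk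
      rcases eq_or_lt_of_le hk' with h | h
      · rw [← h, coeff_sub, coeff_C_mul, hrc, hplc, ha l]
        field_simp [hlead l]
        ring
      · have e1 : (Q (l + 1)).coeff k = 0 :=
          coeff_eq_zero_of_natDegree_lt (by rw [hQdeg]; exact h)
        have e2 : (Q l).coeff k = 0 :=
          coeff_eq_zero_of_degree_lt (lt_trans (hdegQ l) (by exact_mod_cast h))
        have e3 : (p l).coeff k = 0 :=
          coeff_eq_zero_of_natDegree_lt (by rw [hdeg]; exact h)
        rw [coeff_sub, coeff_C_mul, hr0, coeff_sub, coeff_C_mul, coeff_C_mul, e1, e2, e3]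
        ring
    have h1 : ∫ t, ((r - C ((p l).eval 1 * a (l + 1)) * p l) * p l).eval t ∂μ = 0 :=
      orth_lower μ hsupp p hdeg hpne horth l l le_rfl _ hsdeg
    have hpp : ∫ t, (p l * p l).eval t ∂μ = 1 := by
      have := horth l l
      rw [if_pos rfl] at this
      simpa [eval_mul] using this
    have h2 : ∫ t, (r * p l).eval t ∂μ = (p l).eval 1 * a (l + 1) := by
      have e : r * p l =
          (r - C ((p l).eval 1 * a (l + 1)) * p l) * p l +
            C ((p l).eval 1 * a (l + 1)) * (p l * p l) := by ring
      rw [e, J_add μ hsupp, h1, J_Cmul μ, hpp, mul_one, zero_add]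
    have hpoly2 : r * p l - C ((p l).eval 1) * r =
        C ((p l).eval 1) * (Q l * p (l + 1)) - C ((p (l + 1)).eval 1) * (Q l * p l) := by
      linear_combination Q l * hr - r * hQ l
    have h3 := congrArg (fun f : Polynomial ℝ => ∫ t, f.eval t ∂μ) hpoly2
    rw [J_sub μ hsupp, J_sub μ hsupp, J_Cmul μ, J_Cmul μ, J_Cmul μ, h2,
      hlow l (l + 1) (by omega), hlow l l le_rfl, mul_zero, mul_zero, sub_zero] at h3
    -- h3 : (p l).eval 1 * a (l+1) - (p l).eval 1 * ∫ r = 0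
    have h4 : ∫ t, r.eval t ∂μ = a (l + 1) := by
      have hγ := hone' l
      have h3' := sub_eq_zero.mp h3
      exact (mul_left_cancel₀ hγ h3').symm
    have h5 : ∫ t, r.eval t ∂μ = (p l).eval 1 * d (l + 1) - (p (l + 1)).eval 1 * d l := by
      rw [hr0, J_sub μ hsupp, J_Cmul μ, J_Cmul μ]
    linarith [h4, h5]
  -- closed form for d
  have hdsum : ∀ l, d l =
      (p l).eval 1 * ∑ k ∈ Finset.range l, a (k + 1) / ((p k).eval 1 * (p (k + 1)).eval 1) := by
    intro l
    induction l with
    | zero => simp [hd, hQ0]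
    | succ n ihn =>
      have h6 : (p n).eval 1 * d (n + 1) = (p (n + 1)).eval 1 * d n + a (n + 1) := by
        linarith [hrec n]
      have hγ := hone' n
      have hβ := hone' (n + 1)
      apply mul_left_cancel₀ hγ
      rw [h6, ihn, Finset.sum_range_succ]
      field_simp
  have hmain : ∫ t, q.eval t * (p j).eval t ∂μ = ∫ t, (Q i * p j).eval t ∂μ := by
    rw [hqQ]
    simp [eval_mul]
  constructor
  · intro hji
    rw [hmain]
    have hs := hsym i j
    rw [hlow j i hji.le] at hs
    have : ∫ t, (Q i * p j).eval t ∂μ = (p j).eval 1 * d i - (p i).eval 1 * d j := by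
      linarith [hs]
    rw [this, hdsum i, hdsum j,
      Finset.sum_Ico_eq_sub _ hji.le]
    ring
  · intro hij
    rw [hmain]
    exact hlow i j hij
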